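/- arXiv:1810.08407 — 5 statements merged into one kernel-verified Lean document; each statement's English description precedes it below -/
import Mathlib

section
/- Let f(x) be a monic polynomial of degree n ≥ 3 with distinct real roots α_1,…,α_n, and let F(x,y) = y^n f(x/y) be the associated binary form. Let 0 < η < 1 and A = min_{i≠j} |α_i − α_j|. Suppose x, y ∈ ℤ with y ≠ 0 satisfy |α_{i₀} − x/y| ≤ d/|y|^n for some index i₀ and some d > 0. If |y| ≥ (d/(ηA))^{1/n}, then |F(x,y)| ≤ d(1+η)^{n−1} ∏_{j≠i₀} |α_j − α_{i₀}|. -/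
open Finset

theorem stmt0 (n : ℕ) (hn : 3 ≤ n) (α : Fin n → ℝ) (hα : Function.Injective α)
    (η A d : ℝ) (hη : 0 < η) (hη1 : η < 1) (hd : 0 < d)
    (hA : IsLeast {r : ℝ | ∃ i j : Fin n, i ≠ j ∧ r = |α i - α j|} A)
    (x y : ℤ) (hy : y ≠ 0) (i₀ : Fin n)
    (happrox : |α i₀ - (x : ℝ) / y| ≤ d / |(y : ℝ)| ^ n)
    (hylarge : (d / (η * A)) ^ ((1 : ℝ) / n) ≤ |(y : ℝ)|) :
    |∏ j, ((x : ℝ) - α j * y)| ≤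
      d * (1 + η) ^ (n - 1) * ∏ j ∈ univ.erase i₀, |α j - α i₀| := by
  have hApos : 0 < A := by
    obtain ⟨⟨i, j, hij, hAeq⟩, -⟩ := hA
    rw [hAeq]
    exact abs_pos.mpr (sub_ne_zero.mpr fun h => hij (hα h))
  have hyR : (y : ℝ) ≠ 0 := Int.cast_ne_zero.mpr hy
  have hypos : 0 < |(y : ℝ)| := abs_pos.mpr hyR
  have hnne : (n : ℝ) ≠ 0 := by
    have : 0 < n := by omega
    positivity
  have hpow : d / (η * A) ≤ |(y : ℝ)| ^ n := by
    have h0 : 0 ≤ d / (η * A) := by positivity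
    calc d / (η * A) = ((d / (η * A)) ^ ((1 : ℝ) / n)) ^ (n : ℕ) := by
          rw [← Real.rpow_natCast ((d / (η * A)) ^ ((1 : ℝ) / n)) n,
            ← Real.rpow_mul h0, one_div, inv_mul_cancel₀ hnne, Real.rpow_one]
      _ ≤ |(y : ℝ)| ^ n := pow_le_pow_left₀ (Real.rpow_nonneg h0 _) hylarge n
  have hkey : d / |(y : ℝ)| ^ n ≤ η * A := by
    rw [div_le_iff₀ (by positivity)]
    calc d = (d / (η * A)) * (η * A) := by field_simp
      _ ≤ |(y : ℝ)| ^ n * (η * A) := by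
          have : 0 ≤ η * A := by positivity
          gcongr
      _ = η * A * |(y : ℝ)| ^ n := by ring
  have habs : ∀ j, |(x : ℝ) - α j * y| = |(y : ℝ)| * |(x : ℝ) / y - α j| := by
    intro j
    rw [← abs_mul]
    congr 1
    field_simp
  -- bound on the i₀ factor
  have hi0 : |(x : ℝ) - α i₀ * y| ≤ d / |(y : ℝ)| ^ (n - 1) := by
    rw [habs, ← abs_sub_comm]
    have hyn : |(y : ℝ)| ^ n = |(y : ℝ)| * |(y : ℝ)| ^ (n - 1) := by
      rw [← pow_succ']
      congr 1
      omega
    calc |(y : ℝ)| * |α i₀ - (x : ℝ) / y| ≤ |(y : ℝ)| * (d / |(y : ℝ)| ^ n) := by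
          gcongr
      _ = d / |(y : ℝ)| ^ (n - 1) := by
          rw [hyn]; field_simp
  -- bound on other factors
  have hj : ∀ j ∈ univ.erase i₀,
      |(x : ℝ) - α j * y| ≤ |(y : ℝ)| * ((1 + η) * |α j - α i₀|) := by
    intro j hj
    have hji : j ≠ i₀ := (mem_erase.mp hj).1
    have hAle : A ≤ |α j - α i₀| := hA.2 ⟨j, i₀, hji, rfl⟩
    rw [habs]
    gcongr
    calc |(x : ℝ) / y - α j| ≤ |(x : ℝ) / y - α i₀| + |α i₀ - α j| := abs_sub_le _ _ _
      _ = |α i₀ - (x : ℝ) / y| + |α j - α i₀| := by rw [abs_sub_comm ((x:ℝ)/y), abs_sub_comm (α i₀) (α j)]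
      _ ≤ d / |(y : ℝ)| ^ n + |α j - α i₀| := by gcongr
      _ ≤ η * A + |α j - α i₀| := by gcongr
      _ ≤ η * |α j - α i₀| + |α j - α i₀| := by gcongr
      _ = (1 + η) * |α j - α i₀| := by ring
  have hcard : (univ.erase i₀).card = n - 1 := by
    rw [card_erase_of_mem (mem_univ i₀), card_univ, Fintype.card_fin]
  have hprod : ∏ j ∈ univ.erase i₀, |(x : ℝ) - α j * y| ≤
      |(y : ℝ)| ^ (n - 1) * ((1 + η) ^ (n - 1) * ∏ j ∈ univ.erase i₀, |α j - α i₀|) := by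
    calc ∏ j ∈ univ.erase i₀, |(x : ℝ) - α j * y|
        ≤ ∏ j ∈ univ.erase i₀, |(y : ℝ)| * ((1 + η) * |α j - α i₀|) :=
          Finset.prod_le_prod (fun j _ => abs_nonneg _) hj
      _ = |(y : ℝ)| ^ (n - 1) * ((1 + η) ^ (n - 1) * ∏ j ∈ univ.erase i₀, |α j - α i₀|) := by
          rw [Finset.prod_mul_distrib, Finset.prod_mul_distrib, Finset.prod_const,
            Finset.prod_const, hcard]
  rw [abs_prod, ← Finset.mul_prod_erase univ _ (mem_univ i₀)]
  calc |(x : ℝ) - α i₀ * y| * ∏ j ∈ univ.erase i₀, |(x : ℝ) - α j * y|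
      ≤ (d / |(y : ℝ)| ^ (n - 1)) *
        (|(y : ℝ)| ^ (n - 1) * ((1 + η) ^ (n - 1) * ∏ j ∈ univ.erase i₀, |α j - α i₀|)) := by
        apply mul_le_mul hi0 hprod (Finset.prod_nonneg fun j _ => abs_nonneg _)
        positivity
    _ = d * (1 + η) ^ (n - 1) * ∏ j ∈ univ.erase i₀, |α j - α i₀| := by
        field_simp
end

section
/- With the notation of the previous context (β_j = x − α_j y, i₀ minimizing |β_j|, |F(x,y)| ≤ K, |y| ≥ K^{1/n}/(εA)), one has |β_{i₀}| ≤ c/|y|^{n−1}, where c = K/((1−ε)^{n−1} ∏_{j≠i₀} |α_j − α_{i₀}|). -/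
open Finset

theorem stmt3 (n : ℕ) (hn : 3 ≤ n) (α : Fin n → ℝ) (hα : Function.Injective α)
    (K ε A c : ℝ) (hK : 1 ≤ K) (hε : 0 < ε) (hε1 : ε < 1)
    (hA : IsLeast {r : ℝ | ∃ i j : Fin n, i ≠ j ∧ r = |α i - α j|} A)
    (x y : ℂ) (hF : ‖∏ j, (x - (α j : ℂ) * y)‖ ≤ K)
    (i₀ : Fin n)
    (hmin : ∀ j, ‖x - (α i₀ : ℂ) * y‖ ≤ ‖x - (α j : ℂ) * y‖)
    (hy : K ^ ((1 : ℝ) / n) / (ε * A) ≤ ‖y‖)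
    (hc : c = K / ((1 - ε) ^ (n - 1) * ∏ j ∈ univ.erase i₀, |α j - α i₀|)) :
    ‖x - (α i₀ : ℂ) * y‖ ≤ c / ‖y‖ ^ (n - 1) := by
  have hn0 : (0:ℝ) < n := by positivity
  set β : Fin n → ℝ := fun j => ‖x - (α j : ℂ) * y‖ with hβdef
  have hβnn : ∀ j, 0 ≤ β j := fun j => norm_nonneg _
  have hprod : ∏ j, β j ≤ K := by
    rw [norm_prod] at hF; exact hF
  have hA0 : 0 < A := by
    obtain ⟨⟨i, j, hij, rfl⟩, -⟩ := hA
    exact abs_pos.mpr (sub_ne_zero.mpr (fun h => hij (hα h)))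
  have hroot1 : (1:ℝ) ≤ K ^ ((1:ℝ)/n) := Real.one_le_rpow hK (by positivity)
  have hy0 : 0 < ‖y‖ := lt_of_lt_of_le (by positivity) hy
  have hKroot : K ^ ((1:ℝ)/n) ≤ ε * A * ‖y‖ := by
    rw [div_le_iff₀ (by positivity)] at hy
    nlinarith
  have hpow : β i₀ ^ n ≤ K := by
    calc β i₀ ^ n = ∏ _j : Fin n, β i₀ := by
          rw [Finset.prod_const, card_univ, Fintype.card_fin]
      _ ≤ ∏ j, β j := Finset.prod_le_prod (fun _ _ => hβnn i₀) (fun j _ => hmin j)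
      _ ≤ K := hprod
  have hβi₀le : β i₀ ≤ K ^ ((1:ℝ)/n) := by
    have h := Real.rpow_le_rpow (by positivity) hpow (by positivity : (0:ℝ) ≤ 1/n)
    rwa [← Real.rpow_natCast (β i₀) n, ← Real.rpow_mul (hβnn i₀), mul_one_div,
      div_self (ne_of_gt hn0), Real.rpow_one] at h
  have hlow : ∀ j ∈ univ.erase i₀,
      (1-ε) * |α j - α i₀| * ‖y‖ ≤ β j := by
    intro j hj
    have hji : j ≠ i₀ := Finset.ne_of_mem_erase hj
    have hAle : A ≤ |α j - α i₀| := hA.2 ⟨j, i₀, hji, rfl⟩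
    have htri : |α j - α i₀| * ‖y‖ ≤ β j + β i₀ := by
      have heq : ((α j - α i₀ : ℝ) : ℂ) * y = (x - (α i₀:ℂ)*y) - (x - (α j:ℂ)*y) := by
        push_cast; ring
      calc |α j - α i₀| * ‖y‖
          = ‖((α j - α i₀:ℝ):ℂ) * y‖ := by
            rw [norm_mul, Complex.norm_real, Real.norm_eq_abs]
        _ = ‖(x - (α i₀:ℂ)*y) - (x - (α j:ℂ)*y)‖ := by rw [heq]
        _ ≤ β i₀ + β j := norm_sub_le _ _
        _ = β j + β i₀ := add_comm _ _
    have hεA : β i₀ ≤ ε * |α j - α i₀| * ‖y‖ := by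
      calc β i₀ ≤ K ^ ((1:ℝ)/n) := hβi₀le
        _ ≤ ε * A * ‖y‖ := hKroot
        _ ≤ ε * |α j - α i₀| * ‖y‖ := by nlinarith
    nlinarith
  have hprodlow : (1-ε)^(n-1) * (∏ j ∈ univ.erase i₀, |α j - α i₀|)
      * ‖y‖ ^ (n-1) ≤ ∏ j ∈ univ.erase i₀, β j := by
    have h := Finset.prod_le_prod (f := fun j => (1-ε) * |α j - α i₀| * ‖y‖)
      (g := β) (fun j _ => mul_nonneg (mul_nonneg (by linarith) (abs_nonneg _)) (norm_nonneg _)) hlow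
    calc (1-ε)^(n-1) * (∏ j ∈ univ.erase i₀, |α j - α i₀|) * ‖y‖ ^ (n-1)
        = ∏ j ∈ univ.erase i₀, ((1-ε) * |α j - α i₀| * ‖y‖) := by
          rw [Finset.prod_mul_distrib, Finset.prod_mul_distrib, Finset.prod_const,
            Finset.prod_const, Finset.card_erase_of_mem (mem_univ i₀), card_univ,
            Fintype.card_fin]
      _ ≤ _ := h
  have hsplit : β i₀ * ∏ j ∈ univ.erase i₀, β j = ∏ j, β j :=
    Finset.mul_prod_erase univ β (mem_univ i₀)
  have hP0 : 0 < ∏ j ∈ univ.erase i₀, |α j - α i₀| :=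
    Finset.prod_pos (fun j hj =>
      abs_pos.mpr (sub_ne_zero.mpr fun h => (Finset.ne_of_mem_erase hj) (hα h)))
  have hD : 0 < (1 - ε) ^ (n - 1) * (∏ j ∈ univ.erase i₀, |α j - α i₀|) * ‖y‖ ^ (n - 1) :=
    mul_pos (mul_pos (pow_pos (by linarith) _) hP0) (pow_pos hy0 _)
  rw [hc, div_div, le_div_iff₀ hD]
  calc β i₀ * (((1-ε)^(n-1) * ∏ j ∈ univ.erase i₀, |α j - α i₀|) * ‖y‖ ^ (n-1))
      = β i₀ * ((1-ε)^(n-1) * (∏ j ∈ univ.erase i₀, |α j - α i₀|) * ‖y‖ ^ (n-1)) := by ring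
    _ ≤ β i₀ * ∏ j ∈ univ.erase i₀, β j :=
        mul_le_mul_of_nonneg_left hprodlow (hβnn i₀)
    _ = ∏ j, β j := hsplit
    _ ≤ K := hprod
end

section
/- The polynomial f(x) = x⁴ − 9x³ − 21x² + 88x + 48 is irreducible over ℚ and has four distinct real roots. -/
open Polynomial

-- monic quadratic representation
instance fact11 : Fact (Nat.Prime 11) := ⟨by norm_num⟩

lemma quad_eq {K : Type*} [Field K] (a : K[X]) (hm : a.Monic) (hd : a.natDegree = 2) :
    a = X ^ 2 + C (a.coeff 1) * X + C (a.coeff 0) := by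
  ext n
  have h2 : a.coeff 2 = 1 := by
    have := hm.coeff_natDegree
    rwa [hd] at this
  rcases n with _ | _ | _ | n
  · simp
  · simp
  · simp [coeff_X_pow, h2, coeff_C]
  · have : a.coeff (n + 3) = 0 := coeff_eq_zero_of_natDegree_lt (by omega)
    simp [coeff_X_pow, coeff_C, this]

lemma irred4 {K : Type*} [Field K] (c0 c1 c2 c3 : K)
    (hroot : ∀ x : K, x ^ 4 + c3 * x ^ 3 + c2 * x ^ 2 + c1 * x + c0 ≠ 0)
    (hquad : ∀ a b c d : K, a + c = c3 → b + d + a * c = c2 → a * d + b * c = c1 →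
      b * d = c0 → False) :
    Irreducible (X ^ 4 + C c3 * X ^ 3 + C c2 * X ^ 2 + C c1 * X + C c0) := by
  set f : K[X] := X ^ 4 + C c3 * X ^ 3 + C c2 * X ^ 2 + C c1 * X + C c0 with hf
  have hfm : f.Monic := by
    unfold f; monicity!
  have hf4 : f.natDegree = 4 := by
    unfold f; compute_degree!
  have hlin : ∀ g h : K[X], f = g * h → g.natDegree = 1 → False := by
    intro g h hgh hg1
    have hg0 : g ≠ 0 := fun h0 => by simp [h0] at hg1
    have hco : g.coeff 1 ≠ 0 := by
      have := mt leadingCoeff_eq_zero.mp hg0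
      rwa [leadingCoeff, hg1] at this
    set x := -(g.coeff 0) / (g.coeff 1) with hx
    have hgx : g.eval x = 0 := by
      rw [eq_X_add_C_of_natDegree_le_one hg1.le]
      simp only [eval_add, eval_mul, eval_C, eval_X, hx, mul_div_cancel₀ _ hco]
      ring
    have : f.eval x = 0 := by rw [hgh]; simp [hgx]
    apply hroot x
    simpa [hf, eval_add, eval_mul, eval_pow] using this
  constructor
  · intro hu
    have := natDegree_eq_zero_of_isUnit hu
    omega
  · intro a b hab
    by_contra hcon
    push_neg at hcon
    obtain ⟨hua, hub⟩ := hcon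
    have ha0 : a ≠ 0 := by rintro rfl; simp at hab; exact hfm.ne_zero (by simpa using hab)
    have hb0 : b ≠ 0 := by rintro rfl; simp at hab; exact hfm.ne_zero (by simpa using hab)
    have hdeg : a.natDegree + b.natDegree = 4 := by
      rw [← natDegree_mul ha0 hb0, ← hab, hf4]
    have ha1 : 1 ≤ a.natDegree := by
      by_contra h
      push_neg at h
      obtain ⟨ca, hca⟩ := natDegree_eq_zero.mp (show a.natDegree = 0 by omega)
      exact hua (hca ▸ isUnit_C.mpr (isUnit_iff_ne_zero.mpr (fun h0 => ha0 (by simp [← hca, h0]))))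
    have hb1 : 1 ≤ b.natDegree := by
      by_contra h
      push_neg at h
      obtain ⟨cb, hcb⟩ := natDegree_eq_zero.mp (show b.natDegree = 0 by omega)
      exact hub (hcb ▸ isUnit_C.mpr (isUnit_iff_ne_zero.mpr (fun h0 => hb0 (by simp [← hcb, h0]))))
    have ha3 : a.natDegree ≤ 3 := by omega
    interval_cases h : a.natDegree
    · exact hlin a b hab h
    · -- degree 2 case
      have hu0 : a.leadingCoeff ≠ 0 := leadingCoeff_ne_zero.mpr ha0
      set a' : K[X] := C a.leadingCoeff⁻¹ * a with ha'
      set b' : K[X] := C a.leadingCoeff * b with hb'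
      have hfab : f = a' * b' := by
        rw [hab, ha', hb']
        rw [show C a.leadingCoeff⁻¹ * a * (C a.leadingCoeff * b)
            = (C a.leadingCoeff⁻¹ * C a.leadingCoeff) * (a * b) by ring, ← C_mul,
          inv_mul_cancel₀ hu0]
        simp
      have ha'm : a'.Monic := by
        unfold Monic
        rw [ha', leadingCoeff_mul, leadingCoeff_C, inv_mul_cancel₀ hu0]
      have ha'd : a'.natDegree = 2 := by
        rw [ha', natDegree_mul (by simpa using inv_ne_zero hu0) ha0, natDegree_C, h]
      have hb'm : b'.Monic := ha'm.of_mul_monic_left (hfab ▸ hfm)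
      have hb'd : b'.natDegree = 2 := by
        have : a'.natDegree + b'.natDegree = 4 := by
          rw [← natDegree_mul ha'm.ne_zero hb'm.ne_zero, ← hfab, hf4]
        omega
      have hea := quad_eq a' ha'm ha'd
      have heb := quad_eq b' hb'm hb'd
      set A := a'.coeff 1; set B := a'.coeff 0; set Cc := b'.coeff 1; set D := b'.coeff 0
      set s3 := A + Cc with hs3
      set s2 := B + D + A * Cc with hs2
      set s1 := A * D + B * Cc with hs1
      set s0 := B * D with hs0
      have hexp : f = X ^ 4 + C s3 * X ^ 3 + C s2 * X ^ 2
          + C s1 * X + C s0 := by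
        rw [hs3, hs2, hs1, hs0]
        rw [hfab, hea, heb]
        simp only [map_add, map_mul]
        ring
      have e3 : c3 = s3 := by
        have := congrArg (fun p => Polynomial.coeff p 3) (hf.symm.trans hexp)
        simpa [coeff_X_pow, coeff_C] using this
      have e2 : c2 = s2 := by
        have := congrArg (fun p => Polynomial.coeff p 2) (hf.symm.trans hexp)
        simpa [coeff_X_pow, coeff_C] using this
      have e1 : c1 = s1 := by
        have := congrArg (fun p => Polynomial.coeff p 1) (hf.symm.trans hexp)
        simpa [coeff_X_pow, coeff_C] using this
      have e0 : c0 = s0 := by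
        have := congrArg (fun p => Polynomial.coeff p 0) (hf.symm.trans hexp)
        simpa [coeff_X_pow, coeff_C] using this
      exact hquad A B Cc D e3.symm e2.symm e1.symm e0.symm
    · exact hlin b a (by rw [hab, mul_comm]) (by omega)

theorem stmt12 :
    Irreducible (X ^ 4 - 9 * X ^ 3 - 21 * X ^ 2 + 88 * X + 48 : ℚ[X]) ∧
      ∃ r : Fin 4 → ℝ, Function.Injective r ∧
        ∀ i, (r i) ^ 4 - 9 * (r i) ^ 3 - 21 * (r i) ^ 2 + 88 * (r i) + 48 = 0 := by
  constructor
  · -- irreducibility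
    set fZ : ℤ[X] := X ^ 4 - 9 * X ^ 3 - 21 * X ^ 2 + 88 * X + 48 with hfZ
    have hmZ : fZ.Monic := by unfold fZ; monicity!
    have hmap11 : fZ.map (Int.castRingHom (ZMod 11))
        = X ^ 4 + C 2 * X ^ 3 + C 1 * X ^ 2 + C 0 * X + C 4 := by
      have h11 : (11 : (ZMod 11)[X]) = 0 := by
        rw [(map_ofNat (C : ZMod 11 →+* (ZMod 11)[X]) 11).symm,
          show (11 : ZMod 11) = 0 from by decide, map_zero]
      rw [hfZ]
      simp only [Polynomial.map_add, Polynomial.map_sub, Polynomial.map_mul,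
        Polynomial.map_pow, Polynomial.map_X, Polynomial.map_ofNat, map_ofNat, map_one, map_zero]
      linear_combination (-X ^ 3 - 2 * X ^ 2 + 8 * X + 4) * h11
    have hirr11 : Irreducible (fZ.map (Int.castRingHom (ZMod 11))) := by
      rw [hmap11]
      have hroot : ∀ x : ZMod 11, x ^ 4 + 2 * x ^ 3 + 1 * x ^ 2 + 0 * x + 4 ≠ 0 := by decide
      have hq : ∀ a b c d : ZMod 11, a + c = 2 → b + d + a * c = 1 → a * d + b * c = 0 →
          b * d = 4 → False := by decide
      exact irred4 4 0 1 2 hroot hq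
    have hirrZ : Irreducible fZ := hmZ.irreducible_of_irreducible_map _ _ hirr11
    have hirrQ : Irreducible (fZ.map (Int.castRingHom ℚ)) :=
      (IsPrimitive.Int.irreducible_iff_irreducible_map_cast hmZ.isPrimitive).mp hirrZ
    have hmapQ : fZ.map (Int.castRingHom ℚ)
        = (X ^ 4 - 9 * X ^ 3 - 21 * X ^ 2 + 88 * X + 48 : ℚ[X]) := by
      rw [hfZ]
      simp [Polynomial.map_add, Polynomial.map_sub, Polynomial.map_mul,
        Polynomial.map_pow, Polynomial.map_X, Polynomial.map_ofNat]
    rwa [hmapQ] at hirrQ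
  · -- four distinct real roots
    set F : ℝ → ℝ := fun x => x ^ 4 - 9 * x ^ 3 - 21 * x ^ 2 + 88 * x + 48 with hF
    have hc : Continuous F := by unfold F; fun_prop
    obtain ⟨r0, hr0m, hr0⟩ := intermediate_value_Ioo' (by norm_num : (-4:ℝ) ≤ -3)
      hc.continuousOn (show (0:ℝ) ∈ Set.Ioo (F (-3)) (F (-4)) by norm_num [hF])
    obtain ⟨r1, hr1m, hr1⟩ := intermediate_value_Ioo (by norm_num : (-1:ℝ) ≤ 0)
      hc.continuousOn (show (0:ℝ) ∈ Set.Ioo (F (-1)) (F 0) by norm_num [hF])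
    obtain ⟨r2, hr2m, hr2⟩ := intermediate_value_Ioo' (by norm_num : (2:ℝ) ≤ 3)
      hc.continuousOn (show (0:ℝ) ∈ Set.Ioo (F 3) (F 2) by norm_num [hF])
    obtain ⟨r3, hr3m, hr3⟩ := intermediate_value_Ioo (by norm_num : (10:ℝ) ≤ 11)
      hc.continuousOn (show (0:ℝ) ∈ Set.Ioo (F 10) (F 11) by norm_num [hF])
    refine ⟨![r0, r1, r2, r3], ?_, ?_⟩
    · obtain ⟨h0a, h0b⟩ := hr0m; obtain ⟨h1a, h1b⟩ := hr1m
      obtain ⟨h2a, h2b⟩ := hr2m; obtain ⟨h3a, h3b⟩ := hr3m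
      intro i j hij
      fin_cases i <;> fin_cases j <;>
        simp at hij <;>
        first | rfl | (exfalso; linarith)
    · intro i
      fin_cases i <;>
        simpa [hF] using (by assumption : F _ = 0)
end

section
/- Let m ≡ 1, 2 mod 4 be squarefree, F(x,y) = ∏(x − α_j y) a monic integer binary form of degree n ≥ 3 with distinct real roots, K ≥ 1, 0 < ε < 1, and set A = min_{i≠j}|α_i−α_j|, B = min_i ∏_{j≠i}|α_j−α_i|, C = max{K/((1−ε)^{n−1}B), 1}, C₂ = max{K^{1/n}/(εA), C^{1/(n−2)}}. If x = x₁+x₂·i√m, y = y₁+y₂·i√m with x₁,x₂,y₁,y₂ ∈ ℤ satisfy |F(x,y)| ≤ K and |y| > C₂, then x₂y₁ = x₁y₂. -/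
open Finset

theorem stmt16 (m : ℤ) (hm : 1 < m) (hsf : Squarefree m)
    (hmod : m % 4 = 1 ∨ m % 4 = 2)
    (n : ℕ) (hn : 3 ≤ n) (α : Fin n → ℝ) (hα : Function.Injective α)
    (hint : ∀ k : ℕ, ∃ z : ℤ,
      ((∏ j, (Polynomial.X - Polynomial.C (α j)) : Polynomial ℝ)).coeff k = z)
    (K ε A B C C₂ : ℝ) (hK : 1 ≤ K) (hε : 0 < ε) (hε1 : ε < 1)
    (hA : IsLeast {r : ℝ | ∃ i j : Fin n, i ≠ j ∧ r = |α i - α j|} A)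
    (hB : IsLeast {r : ℝ | ∃ i : Fin n, r = ∏ j ∈ univ.erase i, |α j - α i|} B)
    (hC : C = max (K / ((1 - ε) ^ (n - 1) * B)) 1)
    (hC₂ : C₂ = max (K ^ ((1 : ℝ) / n) / (ε * A)) (C ^ ((1 : ℝ) / ((n : ℝ) - 2))))
    (x₁ x₂ y₁ y₂ : ℤ) (x y : ℂ)
    (hx : x = (x₁ : ℂ) + (x₂ : ℂ) * (Complex.I * Real.sqrt m))
    (hy : y = (y₁ : ℂ) + (y₂ : ℂ) * (Complex.I * Real.sqrt m))
    (hF : ‖∏ j, (x - (α j : ℂ) * y)‖ ≤ K)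
    (hylarge : C₂ < ‖y‖) :
    x₂ * y₁ = x₁ * y₂ := by
  set r : Fin n → ℝ := fun j => ‖x - (α j : ℂ) * y‖ with hr
  have hKpos : (0:ℝ) < K := lt_of_lt_of_le one_pos hK
  have hApos : 0 < A := by
    obtain ⟨i, j, hij, hAe⟩ := hA.1
    rw [hAe]
    exact abs_pos.2 (sub_ne_zero.2 fun h => hij (hα h))
  have hBpos : 0 < B := by
    obtain ⟨i, hBe⟩ := hB.1
    rw [hBe]
    exact Finset.prod_pos fun j hj =>
      abs_pos.2 (sub_ne_zero.2 fun h => (Finset.ne_of_mem_erase hj) (hα h))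
  have hC1 : 1 ≤ C := hC ▸ le_max_right _ _
  have hCK : K / ((1 - ε) ^ (n - 1) * B) ≤ C := hC ▸ le_max_left _ _
  have hn3 : (3:ℝ) ≤ (n:ℝ) := by exact_mod_cast hn
  have hn2 : (1:ℝ) ≤ (n:ℝ) - 2 := by linarith
  have hC₂1 : 1 ≤ C₂ := by
    have h1 : (1:ℝ) ≤ C ^ ((1:ℝ)/((n:ℝ)-2)) := Real.one_le_rpow hC1 (by positivity)
    exact le_trans h1 (hC₂ ▸ le_max_right _ _)
  have hy1 : (1:ℝ) < ‖y‖ := lt_of_le_of_lt hC₂1 hylarge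
  have hy0 : (0:ℝ) < ‖y‖ := lt_trans one_pos hy1
  have hprod : ∏ j, r j ≤ K := by
    rw [norm_prod] at hF
    exact hF
  -- find the index with small |x - α i y|
  have hex : ∃ i, r i ≤ ε * A * ‖y‖ := by
    by_contra h
    push_neg at h
    have hεA : 0 < ε * A := mul_pos hε hApos
    have hK1 : K ^ ((1:ℝ)/n) ≤ ε * A * C₂ := by
      have h2 : K ^ ((1:ℝ)/n) / (ε * A) ≤ C₂ := hC₂ ▸ le_max_left _ _
      calc K ^ ((1:ℝ)/n) = ε * A * (K ^ ((1:ℝ)/n) / (ε * A)) := by field_simp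
        _ ≤ ε * A * C₂ := by nlinarith
    have hlt : ∀ j : Fin n, K ^ ((1:ℝ)/n) < r j := fun j => by
      have := mul_lt_mul_of_pos_left hylarge hεA
      exact lt_of_le_of_lt (le_trans hK1 this.le) (h j)
    have hne : (univ : Finset (Fin n)).Nonempty := univ_nonempty_iff.2 ⟨⟨0, by omega⟩⟩
    have hbig : ∏ j : Fin n, K ^ ((1:ℝ)/n) < ∏ j, r j := by
      apply Finset.prod_lt_prod_of_nonempty (fun j _ => Real.rpow_pos_of_pos hKpos _)
        (fun j _ => hlt j) hne
    have heq : ∏ j : Fin n, K ^ ((1:ℝ)/n) = K := by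
      rw [Finset.prod_const, card_univ, Fintype.card_fin,
        ← Real.rpow_natCast (K ^ ((1:ℝ)/n)) n, ← Real.rpow_mul hKpos.le]
      rw [one_div, inv_mul_cancel₀ (by positivity : (n:ℝ) ≠ 0), Real.rpow_one]
    rw [heq] at hbig
    linarith
  obtain ⟨i, hi⟩ := hex
  have hri0 : 0 ≤ r i := norm_nonneg _
  -- lower bound on the other factors
  have hjbound : ∀ j ∈ univ.erase i, (1 - ε) * |α j - α i| * ‖y‖ ≤ r j := by
    intro j hj
    have hji : j ≠ i := Finset.ne_of_mem_erase hj
    have hAle : A ≤ |α j - α i| := hA.2 ⟨j, i, hji, rfl⟩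
    have htri : |α j - α i| * ‖y‖ ≤ r j + r i := by
      simp only [hr]
      have h1 := norm_add_le (x - (α i:ℂ) * y) (-(x - (α j:ℂ) * y))
      have h2 : (x - (α i:ℂ) * y) + -(x - (α j:ℂ) * y) = ((α j - α i : ℝ):ℂ) * y := by
        push_cast; ring
      rw [h2, norm_neg, norm_mul, Complex.norm_real, Real.norm_eq_abs] at h1
      linarith
    nlinarith [mul_le_mul_of_nonneg_left (mul_le_mul_of_nonneg_right hAle hy0.le) hε.le]
  have hBi : B ≤ ∏ j ∈ univ.erase i, |α j - α i| := hB.2 ⟨i, rfl⟩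
  have hcard : (univ.erase i).card = n - 1 := by
    rw [card_erase_of_mem (mem_univ i), card_univ, Fintype.card_fin]
  have hprod2 : (1 - ε) ^ (n-1) * B * ‖y‖ ^ (n-1) ≤ ∏ j ∈ univ.erase i, r j := by
    have hε0 : (0:ℝ) < 1 - ε := by linarith
    calc (1 - ε) ^ (n-1) * B * ‖y‖ ^ (n-1)
        ≤ (1 - ε) ^ (n-1) * (∏ j ∈ univ.erase i, |α j - α i|) * ‖y‖ ^ (n-1) := by
          have := mul_le_mul_of_nonneg_left hBi (pow_nonneg hε0.le (n-1))
          nlinarith [pow_nonneg hy0.le (n-1)]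
      _ = ∏ j ∈ univ.erase i, ((1 - ε) * |α j - α i| * ‖y‖) := by
          rw [Finset.prod_mul_distrib, Finset.prod_mul_distrib, Finset.prod_const,
            Finset.prod_const, hcard]
      _ ≤ ∏ j ∈ univ.erase i, r j :=
          Finset.prod_le_prod (fun j hj => by positivity) hjbound
  have hmain : r i * ((1 - ε) ^ (n-1) * B * ‖y‖ ^ (n-1)) ≤ K := by
    calc r i * ((1 - ε) ^ (n-1) * B * ‖y‖ ^ (n-1))
        ≤ r i * ∏ j ∈ univ.erase i, r j := mul_le_mul_of_nonneg_left hprod2 hri0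
      _ = ∏ j, r j := Finset.mul_prod_erase univ r (mem_univ i)
      _ ≤ K := hprod
  -- key smallness bound
  have hkey : r i * ‖y‖ < 1 := by
    have hε0 : (0:ℝ) < 1 - ε := by linarith
    have hDpos : (0:ℝ) < (1 - ε) ^ (n-1) * B := mul_pos (pow_pos hε0 _) hBpos
    have hKCD : K ≤ C * ((1 - ε) ^ (n-1) * B) := (div_le_iff₀ hDpos).1 hCK
    have hCyn : C < ‖y‖ ^ (n-2) := by
      have h1 : C₂ ^ (n-2) < ‖y‖ ^ (n-2) :=
        pow_lt_pow_left₀ hylarge (by linarith) (by omega)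
      have h3 : C ^ ((1:ℝ)/((n:ℝ)-2)) ≤ C₂ := hC₂ ▸ le_max_right _ _
      have h4 : (C ^ ((1:ℝ)/((n:ℝ)-2))) ^ (n-2) ≤ C₂ ^ (n-2) :=
        pow_le_pow_left₀ (by positivity) h3 _
      have hexp : (1:ℝ)/((n:ℝ)-2) * ((n-2:ℕ):ℝ) = 1 := by
        rw [Nat.cast_sub (by omega : 2 ≤ n)]
        push_cast
        field_simp
      rw [← Real.rpow_natCast (C ^ ((1:ℝ)/((n:ℝ)-2))) (n-2),
        ← Real.rpow_mul (by linarith : (0:ℝ) ≤ C), hexp, Real.rpow_one] at h4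
      linarith
    have hyeq : r i * ‖y‖ * ((1 - ε) ^ (n-1) * B * ‖y‖ ^ (n-2))
        = r i * ((1 - ε) ^ (n-1) * B * ‖y‖ ^ (n-1)) := by
      rw [show n - 1 = (n-2) + 1 from by omega, pow_succ]
      ring
    have hfin : r i * ‖y‖ * ((1 - ε) ^ (n-1) * B * ‖y‖ ^ (n-2))
        < 1 * ((1 - ε) ^ (n-1) * B * ‖y‖ ^ (n-2)) := by
      calc r i * ‖y‖ * ((1 - ε) ^ (n-1) * B * ‖y‖ ^ (n-2))
          = r i * ((1 - ε) ^ (n-1) * B * ‖y‖ ^ (n-1)) := hyeq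
        _ ≤ K := hmain
        _ ≤ C * ((1 - ε) ^ (n-1) * B) := hKCD
        _ < ‖y‖ ^ (n-2) * ((1 - ε) ^ (n-1) * B) :=
            mul_lt_mul_of_pos_right hCyn hDpos
        _ = 1 * ((1 - ε) ^ (n-1) * B * ‖y‖ ^ (n-2)) := by ring
    exact lt_of_mul_lt_mul_right hfin (by positivity)
  -- compute the imaginary part of x * conj y
  have hm0 : (0:ℝ) < (m:ℝ) := by exact_mod_cast lt_trans one_pos hm
  have hsq : (0:ℝ) < Real.sqrt m := Real.sqrt_pos.2 hm0
  have hsq1 : (1:ℝ) ≤ Real.sqrt m := by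
    rw [show (1:ℝ) = Real.sqrt 1 from (Real.sqrt_one).symm]
    exact Real.sqrt_le_sqrt (by exact_mod_cast hm.le)
  have him : (x * (starRingEnd ℂ) y).im = ((x₂ * y₁ - x₁ * y₂ : ℤ) : ℝ) * Real.sqrt m := by
    subst hx hy
    simp [Complex.mul_im, Complex.add_re, Complex.add_im, Complex.mul_re,
      Complex.I_re, Complex.I_im]
    push_cast
    ring
  have heqim : (x * (starRingEnd ℂ) y).im = ((x - (α i:ℂ) * y) * (starRingEnd ℂ) y).im := by
    have h5 : (α i:ℂ) * y * (starRingEnd ℂ) y = ((α i * Complex.normSq y : ℝ) : ℂ) := by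
      rw [mul_assoc, Complex.mul_conj]
      push_cast
      ring
    have h6 : x * (starRingEnd ℂ) y
        = (x - (α i:ℂ) * y) * (starRingEnd ℂ) y + (α i:ℂ) * y * (starRingEnd ℂ) y := by ring
    rw [h6, Complex.add_im, h5, Complex.ofReal_im, add_zero]
  have h1 : |((x₂ * y₁ - x₁ * y₂ : ℤ) : ℝ) * Real.sqrt m| ≤ r i * ‖y‖ := by
    rw [← him, heqim]
    calc |((x - (α i:ℂ) * y) * (starRingEnd ℂ) y).im|
        ≤ ‖(x - (α i:ℂ) * y) * (starRingEnd ℂ) y‖ := Complex.abs_im_le_norm _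
      _ = r i * ‖y‖ := by rw [norm_mul, Complex.norm_conj]
  rw [abs_mul, abs_of_pos hsq] at h1
  have h7 : |((x₂ * y₁ - x₁ * y₂ : ℤ) : ℝ)| * Real.sqrt m < 1 * Real.sqrt m := by
    calc |((x₂ * y₁ - x₁ * y₂ : ℤ) : ℝ)| * Real.sqrt m ≤ r i * ‖y‖ := h1
      _ < 1 := hkey
      _ ≤ 1 * Real.sqrt m := by linarith
  have h8 : |((x₂ * y₁ - x₁ * y₂ : ℤ) : ℝ)| < 1 := lt_of_mul_lt_mul_right h7 hsq.le
  have h9 : |x₂ * y₁ - x₁ * y₂| < 1 := by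
    rw [← Int.cast_abs] at h8
    exact_mod_cast h8
  have h10 : x₂ * y₁ - x₁ * y₂ = 0 := by rwa [Int.abs_lt_one_iff] at h9
  linarith
end

section
/- With F, m ≡ 1,2 mod 4, K, ε, A, B, C, C₂ as above: if (x,y) = (x₁+x₂i√m, y₁+y₂i√m) ∈ ℤ[i√m]² satisfies |F(x,y)| ≤ K, |y| > C₂, and y₁ = 0, then x₁ = 0 and |F(x₂,y₂)| ≤ K/(√m)^n. -/
open Finset

theorem stmt19 (m : ℤ) (hm : 1 < m) (hsf : Squarefree m)
    (hmod : m % 4 = 1 ∨ m % 4 = 2)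
    (n : ℕ) (hn : 3 ≤ n) (α : Fin n → ℝ) (hα : Function.Injective α)
    (hint : ∀ k : ℕ, ∃ z : ℤ,
      ((∏ j, (Polynomial.X - Polynomial.C (α j)) : Polynomial ℝ)).coeff k = z)
    (K ε A B C C₂ : ℝ) (hK : 1 ≤ K) (hε : 0 < ε) (hε1 : ε < 1)
    (hA : IsLeast {r : ℝ | ∃ i j : Fin n, i ≠ j ∧ r = |α i - α j|} A)
    (hB : IsLeast {r : ℝ | ∃ i : Fin n, r = ∏ j ∈ univ.erase i, |α j - α i|} B)
    (hC : C = max (K / ((1 - ε) ^ (n - 1) * B)) 1)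
    (hC₂ : C₂ = max (K ^ ((1 : ℝ) / n) / (ε * A)) (C ^ ((1 : ℝ) / ((n : ℝ) - 2))))
    (x₁ x₂ y₁ y₂ : ℤ) (x y : ℂ)
    (hx : x = (x₁ : ℂ) + (x₂ : ℂ) * (Complex.I * Real.sqrt m))
    (hy : y = (y₁ : ℂ) + (y₂ : ℂ) * (Complex.I * Real.sqrt m))
    (hF : ‖∏ j, (x - (α j : ℂ) * y)‖ ≤ K)
    (hylarge : C₂ < ‖y‖)
    (hy₁ : y₁ = 0) :
    x₁ = 0 ∧ |∏ j, ((x₂ : ℝ) - α j * y₂)| ≤ K / (Real.sqrt m) ^ n := by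
  have hn3 : (3:ℝ) ≤ (n:ℝ) := by exact_mod_cast hn
  have hnne : (n:ℝ) ≠ 0 := by linarith
  -- positivity of A and B
  obtain ⟨i0, j0, hij0, hA0⟩ := hA.1
  have hApos : 0 < A := by
    rw [hA0]; exact abs_pos.mpr (sub_ne_zero.mpr (fun h => hij0 (hα h)))
  obtain ⟨i0', hB0⟩ := hB.1
  have hBpos : 0 < B := by
    rw [hB0]
    refine Finset.prod_pos fun j hj => ?_
    exact abs_pos.mpr (sub_ne_zero.mpr fun h => (Finset.mem_erase.mp hj).1 (hα h))
  have hC1 : 1 ≤ C := hC ▸ le_max_right _ _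
  have hC0 : 0 ≤ C := by linarith
  set s := Real.sqrt (m:ℝ) with hsdef
  have hs0 : 0 ≤ s := Real.sqrt_nonneg _
  have hspos : 0 < s := Real.sqrt_pos.mpr (by exact_mod_cast (by linarith : (0:ℤ) < m))
  set Y := ‖y‖ with hYdef
  set f : Fin n → ℝ := fun j => ‖x - (α j : ℂ) * y‖ with hfdef
  have hfnn : ∀ j, 0 ≤ f j := fun j => norm_nonneg _
  have hexp : (1:ℝ)/((n:ℝ)-2) * ((n-2:ℕ):ℝ) = 1 := by
    rw [Nat.cast_sub (by omega)]
    push_cast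
    rw [one_div]
    field_simp
    exact div_self (by linarith)
  -- Y > 1
  have hC2rp : (1:ℝ) ≤ C ^ ((1:ℝ)/((n:ℝ)-2)) := by
    apply Real.one_le_rpow hC1
    have : (0:ℝ) < (n:ℝ) - 2 := by linarith
    positivity
  have hYC2 : C ^ ((1:ℝ)/((n:ℝ)-2)) < Y := lt_of_le_of_lt (hC₂ ▸ le_max_right _ _) hylarge
  have hY1 : 1 < Y := lt_of_le_of_lt hC2rp hYC2
  have hY0 : 0 ≤ Y := by linarith
  -- real part of each factor is x₁
  have hre : ∀ j, (x - (α j : ℂ) * y).re = (x₁:ℝ) := by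
    intro j
    subst hx hy
    simp [hy₁, Complex.mul_re, Complex.mul_im, Complex.add_re, Complex.add_im]
  -- Step 1: x₁ = 0
  have hx₁ : x₁ = 0 := by
    by_contra hx1
    have h1le : (1:ℝ) ≤ |(x₁:ℝ)| := by
      have := Int.one_le_abs hx1
      exact_mod_cast this
    have hfge : ∀ j, (1:ℝ) ≤ f j := by
      intro j
      refine h1le.trans ?_
      have := Complex.abs_re_le_norm (x - (α j : ℂ) * y)
      rw [hre j] at this
      exact this
    have hne : (univ : Finset (Fin n)).Nonempty := ⟨⟨0, by omega⟩, mem_univ _⟩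
    -- there is a factor ≤ K^(1/n)
    have hκex : ∃ i, f i ≤ K ^ ((1:ℝ)/n) := by
      by_contra hcon
      push_neg at hcon
      have hKeq : K = ∏ _j : Fin n, K ^ ((1:ℝ)/n) := by
        rw [Finset.prod_const, card_univ, Fintype.card_fin,
          ← Real.rpow_natCast (K ^ ((1:ℝ)/n)) n, ← Real.rpow_mul (by linarith)]
        rw [one_div, inv_mul_cancel₀ hnne, Real.rpow_one]
      have hlt : K < ∏ j, f j := by
        rw [hKeq]
        exact Finset.prod_lt_prod_of_nonempty (fun j _ => by positivity)
          (fun j _ => hcon j) hne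
      have : ∏ j, f j ≤ K := by
        refine le_trans ?_ hF
        rw [norm_prod]
      linarith
    obtain ⟨i, hi⟩ := hκex
    have hκY : K ^ ((1:ℝ)/n) < ε * A * Y := by
      have h1 : K ^ ((1:ℝ)/n) / (ε * A) < Y :=
        lt_of_le_of_lt (hC₂ ▸ le_max_left _ _) hylarge
      have hεA : 0 < ε * A := by positivity
      calc K ^ ((1:ℝ)/n) = K ^ ((1:ℝ)/n) / (ε*A) * (ε*A) := by field_simp
        _ < Y * (ε*A) := by exact mul_lt_mul_of_pos_right h1 hεA
        _ = ε * A * Y := by ring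
    -- lower bound for other factors
    have hlow : ∀ j ∈ univ.erase i, (1-ε) * Y * |α j - α i| ≤ f j := by
      intro j hj
      have hji : j ≠ i := (Finset.mem_erase.mp hj).1
      have hAij : A ≤ |α i - α j| := hA.2 ⟨i, j, fun h => hji (h.symm), rfl⟩
      have ht : ‖(((α i - α j : ℝ)):ℂ) * y‖ ≤ f j + f i := by
        have he : (((α i - α j : ℝ)):ℂ) * y = (x - (α j:ℂ) * y) - (x - (α i:ℂ) * y) := by
          push_cast; ring
        rw [he]
        simp only [hfdef]
        exact norm_sub_le _ _
      rw [norm_mul, Complex.norm_real, Real.norm_eq_abs] at ht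
      have e1 : ε * A * Y ≤ ε * |α i - α j| * Y := by
        have := mul_le_mul_of_nonneg_right (mul_le_mul_of_nonneg_left hAij hε.le) hY0
        linarith
      have e2 : |α j - α i| = |α i - α j| := abs_sub_comm _ _
      rw [e2]
      nlinarith [hi, hκY, ht, e1]
    -- product bound
    have hcard : (univ.erase i).card = n - 1 := by
      rw [Finset.card_erase_of_mem (mem_univ i), card_univ, Fintype.card_fin]
    have hBle : B ≤ ∏ j ∈ univ.erase i, |α j - α i| := hB.2 ⟨i, rfl⟩
    have hprod1 : ((1-ε) * Y)^(n-1) * B ≤ ∏ j ∈ univ.erase i, f j := by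
      calc ((1-ε) * Y)^(n-1) * B
          ≤ ((1-ε) * Y)^(n-1) * ∏ j ∈ univ.erase i, |α j - α i| := by
            apply mul_le_mul_of_nonneg_left hBle
            exact pow_nonneg (mul_nonneg (by linarith) hY0) _
        _ = ∏ j ∈ univ.erase i, ((1-ε) * Y * |α j - α i|) := by
            rw [Finset.prod_mul_distrib, Finset.prod_const, hcard]
        _ ≤ ∏ j ∈ univ.erase i, f j :=
            Finset.prod_le_prod
              (fun j _ => mul_nonneg (mul_nonneg (by linarith) hY0) (abs_nonneg _)) hlow
    have hKge : ((1-ε) * Y)^(n-1) * B ≤ K := by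
      have hsplit : ∏ j, f j = f i * ∏ j ∈ univ.erase i, f j :=
        (Finset.mul_prod_erase univ f (mem_univ i)).symm
      have hPnn : 0 ≤ ∏ j ∈ univ.erase i, f j := Finset.prod_nonneg fun j _ => hfnn j
      have h2 : ∏ j ∈ univ.erase i, f j ≤ ∏ j, f j := by
        rw [hsplit]
        exact le_mul_of_one_le_left hPnn (hfge i)
      have h3 : ∏ j, f j ≤ K := by
        refine le_trans ?_ hF
        rw [norm_prod]
      linarith
    -- contradiction: Y^(n-1) ≤ C but Y^(n-1) > C
    have hεY : (0:ℝ) < (1-ε)^(n-1) * B := mul_pos (pow_pos (by linarith) _) hBpos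
    have hYup : Y^(n-1) ≤ C := by
      have hCK : K / ((1-ε)^(n-1) * B) ≤ C := hC ▸ le_max_left _ _
      have hK2 : K ≤ C * ((1-ε)^(n-1) * B) := (div_le_iff₀ hεY).mp hCK
      rw [mul_pow] at hKge
      have h4 : Y^(n-1) * ((1-ε)^(n-1) * B) ≤ C * ((1-ε)^(n-1) * B) := by
        calc Y^(n-1) * ((1-ε)^(n-1) * B) = (1-ε)^(n-1) * Y^(n-1) * B := by ring
          _ ≤ K := hKge
          _ ≤ C * ((1-ε)^(n-1) * B) := hK2
      exact le_of_mul_le_mul_right h4 hεY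
    have hYdown : C < Y^(n-2) := by
      have hrw : (C ^ ((1:ℝ)/((n:ℝ)-2)))^(n-2:ℕ) = C := by
        rw [← Real.rpow_natCast (C ^ ((1:ℝ)/((n:ℝ)-2))) (n-2), ← Real.rpow_mul hC0,
          hexp, Real.rpow_one]
      calc C = (C ^ ((1:ℝ)/((n:ℝ)-2)))^(n-2:ℕ) := hrw.symm
        _ < Y^(n-2) := by
            apply pow_lt_pow_left₀ hYC2 (Real.rpow_nonneg hC0 _)
            omega
    have hsucc : n - 1 = (n-2) + 1 := by omega
    have : C < Y^(n-1) := by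
      rw [hsucc, pow_succ]
      calc C = C * 1 := (mul_one C).symm
        _ < Y^(n-2) * Y := mul_lt_mul hYdown hY1.le one_pos (pow_nonneg hY0 _)
    linarith
  -- Step 2: the product bound
  refine ⟨hx₁, ?_⟩
  have hfx : ∀ j, f j = |(x₂:ℝ) - α j * y₂| * s := by
    intro j
    have he : x - (α j:ℂ) * y = (((x₂:ℝ) - α j * y₂ : ℝ):ℂ) * (Complex.I * (s:ℂ)) := by
      rw [hx, hy]
      push_cast [hx₁, hy₁]
      ring
    simp only [hfdef, he, norm_mul, Complex.norm_real, Real.norm_eq_abs, Complex.norm_I, one_mul]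
    rw [abs_of_nonneg hs0]
  have hprod : (∏ j, |(x₂:ℝ) - α j * y₂|) * s^n ≤ K := by
    have : ∏ j, f j = (∏ j, |(x₂:ℝ) - α j * y₂|) * s^n := by
      calc ∏ j, f j = ∏ j, (|(x₂:ℝ) - α j * y₂| * s) := by
            exact Finset.prod_congr rfl fun j _ => hfx j
        _ = (∏ j, |(x₂:ℝ) - α j * y₂|) * s^n := by
            rw [Finset.prod_mul_distrib, Finset.prod_const, card_univ, Fintype.card_fin]
    rw [← this]
    refine le_trans ?_ hF
    rw [norm_prod]
  rw [← Finset.abs_prod] at hprod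
  rw [le_div_iff₀ (by positivity)]
  exact hprod
end
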